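/- Let ε be a real number with 0 < ε < 1, let β ∈ {1, 2}, and let δ₂, ε₈, ε₉, ε₁₀ be real numbers such that (1 − ε)^β/(1 + ε) ≤ δ₂ ≤ (1 + ε)^β/(1 − ε), ((1 − ε)^β/(1 + ε))·(1 − ε) < 1 + ε₈ < ((1 + ε)^β/(1 − ε))·(1 + ε), |ε₉| ≤ ε, and |ε₁₀| ≤ ε. Then δ_t = δ₂ · (1 + ε₁₀) / ((1 + ε₈)·(1 + ε₉)) satisfies (1 − ε)^{β+2}/(1 + ε)^{β+3} < δ_t < (1 + ε)^{β+2}/(1 − ε)^{β+3}. -/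

import Mathlib

theorem delta_t_bounds (ε : ℝ) (hε : 0 < ε) (hε1 : ε < 1) (β : ℕ) (hβ : β = 1 ∨ β = 2)
    (δ₂ ε₈ ε₉ ε₁₀ : ℝ)
    (hδ₂l : (1 - ε) ^ β / (1 + ε) ≤ δ₂) (hδ₂u : δ₂ ≤ (1 + ε) ^ β / (1 - ε))
    (hε₈l : (1 - ε) ^ β / (1 + ε) * (1 - ε) < 1 + ε₈)
    (hε₈u : 1 + ε₈ < (1 + ε) ^ β / (1 - ε) * (1 + ε))
    (hε₉ : |ε₉| ≤ ε) (hε₁₀ : |ε₁₀| ≤ ε) :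
    (1 - ε) ^ (β + 2) / (1 + ε) ^ (β + 3) < δ₂ * (1 + ε₁₀) / ((1 + ε₈) * (1 + ε₉)) ∧
    δ₂ * (1 + ε₁₀) / ((1 + ε₈) * (1 + ε₉)) < (1 + ε) ^ (β + 2) / (1 - ε) ^ (β + 3) := by
  have h1 : (0:ℝ) < 1 - ε := by linarith
  have h2 : (0:ℝ) < 1 + ε := by linarith
  have hx : (0:ℝ) < (1 - ε) ^ β := pow_pos h1 β
  have hy : (0:ℝ) < (1 + ε) ^ β := pow_pos h2 β
  have h9l : 1 - ε ≤ 1 + ε₉ := by have := abs_le.mp hε₉; linarith [this.1]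
  have h9u : 1 + ε₉ ≤ 1 + ε := by have := abs_le.mp hε₉; linarith [this.2]
  have h10l : 1 - ε ≤ 1 + ε₁₀ := by have := abs_le.mp hε₁₀; linarith [this.1]
  have h10u : 1 + ε₁₀ ≤ 1 + ε := by have := abs_le.mp hε₁₀; linarith [this.2]
  have h9p : (0:ℝ) < 1 + ε₉ := lt_of_lt_of_le h1 h9l
  have hδp : (0:ℝ) < δ₂ := lt_of_lt_of_le (div_pos hx h2) hδ₂l
  have hAlbp : (0:ℝ) < (1 - ε) ^ β / (1 + ε) * (1 - ε) :=
    mul_pos (div_pos hx h2) h1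
  have h8p : (0:ℝ) < 1 + ε₈ := lt_trans hAlbp hε₈l
  have hBp : (0:ℝ) < (1 + ε₈) * (1 + ε₉) := mul_pos h8p h9p
  -- numerator bounds
  have hA : (1 - ε) ^ β / (1 + ε) * (1 - ε) ≤ δ₂ * (1 + ε₁₀) :=
    mul_le_mul hδ₂l h10l h1.le hδp.le
  have hAub : δ₂ * (1 + ε₁₀) ≤ (1 + ε) ^ β / (1 - ε) * (1 + ε) :=
    mul_le_mul hδ₂u h10u (le_trans h1.le h10l) (le_of_lt (div_pos hy h1))
  -- denominator bounds
  have hB : (1 + ε₈) * (1 + ε₉) < ((1 + ε) ^ β / (1 - ε) * (1 + ε)) * (1 + ε) :=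
    mul_lt_mul hε₈u h9u h9p (by positivity)
  have hBlb : ((1 - ε) ^ β / (1 + ε) * (1 - ε)) * (1 - ε) < (1 + ε₈) * (1 + ε₉) :=
    mul_lt_mul hε₈l h9l h1 h8p.le
  have hBlbp : (0:ℝ) < ((1 - ε) ^ β / (1 + ε) * (1 - ε)) * (1 - ε) := by positivity
  have hBubp : (0:ℝ) < ((1 + ε) ^ β / (1 - ε) * (1 + ε)) * (1 + ε) := by positivity
  constructor
  · have e1 : (1 - ε) ^ (β + 2) / (1 + ε) ^ (β + 3)
        = ((1 - ε) ^ β / (1 + ε) * (1 - ε)) / (((1 + ε) ^ β / (1 - ε) * (1 + ε)) * (1 + ε)) := by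
      rw [pow_add, pow_add]
      field_simp
    rw [e1]
    calc ((1 - ε) ^ β / (1 + ε) * (1 - ε)) / (((1 + ε) ^ β / (1 - ε) * (1 + ε)) * (1 + ε))
        ≤ (δ₂ * (1 + ε₁₀)) / (((1 + ε) ^ β / (1 - ε) * (1 + ε)) * (1 + ε)) := by
          exact div_le_div_of_nonneg_right hA hBubp.le |>.trans_eq rfl
      _ < (δ₂ * (1 + ε₁₀)) / ((1 + ε₈) * (1 + ε₉)) := by
          exact div_lt_div_of_pos_left (lt_of_lt_of_le hAlbp hA) hBp hB
  · have e2 : (1 + ε) ^ (β + 2) / (1 - ε) ^ (β + 3)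
        = ((1 + ε) ^ β / (1 - ε) * (1 + ε)) / (((1 - ε) ^ β / (1 + ε) * (1 - ε)) * (1 - ε)) := by
      rw [pow_add, pow_add]
      field_simp
    rw [e2]
    calc δ₂ * (1 + ε₁₀) / ((1 + ε₈) * (1 + ε₉))
        ≤ ((1 + ε) ^ β / (1 - ε) * (1 + ε)) / ((1 + ε₈) * (1 + ε₉)) :=
          div_le_div_of_nonneg_right hAub hBp.le |>.trans_eq rfl
      _ < ((1 + ε) ^ β / (1 - ε) * (1 + ε)) / (((1 - ε) ^ β / (1 + ε) * (1 - ε)) * (1 - ε)) :=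
          div_lt_div_of_pos_left (by positivity) hBlbp hBlb
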